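/- A nonzero positive semi-definite function h : Ω × Ω → ℂ is an extreme direction of the convex cone of positive semi-definite functions on Ω (i.e., whenever h = h₁ + h₂ with h₁, h₂ positive semi-definite, each h_i is a nonnegative scalar multiple of h) if and only if h has the form h(λ,μ) = F(λ)·conj(F(μ)) for some function F : Ω → ℂ, i.e., h is a rank-one positive kernel. -/

import Mathlib

open scoped ComplexOrder

open Complex Finset

/-- A kernel `h : Ω × Ω → ℂ` is positive semi-definite. -/
def IsPSDKernel {Ω : Type*} (h : Ω → Ω → ℂ) : Prop :=
  ∀ (n : ℕ) (s : Fin n → Ω) (c : Fin n → ℂ),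
    (0 : ℂ) ≤ ∑ i, ∑ j, h (s i) (s j) * c i * (starRingEnd ℂ) (c j)

variable {Ω : Type} {k : Ω → Ω → ℂ}

lemma diag_nonneg (hk : IsPSDKernel k) (μ : Ω) : 0 ≤ k μ μ := by
  simpa using hk 1 (fun _ => μ) (fun _ => 1)

lemma herm (hk : IsPSDKernel k) (lam mu : Ω) : k mu lam = (starRingEnd ℂ) (k lam mu) := by
  have h1 := hk 2 ![lam, mu] ![1, 1]
  have h2 := hk 2 ![lam, mu] ![1, Complex.I]
  have hd1 := (Complex.nonneg_iff.mp (diag_nonneg hk lam)).2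
  have hd2 := (Complex.nonneg_iff.mp (diag_nonneg hk mu)).2
  simp [Fin.sum_univ_two] at h1 h2
  have i1 := (Complex.nonneg_iff.mp h1).2
  have i2 := (Complex.nonneg_iff.mp h2).2
  apply Complex.ext <;>
    simp only [Complex.add_im, Complex.add_re, Complex.mul_im, Complex.mul_re,
      Complex.conj_re, Complex.conj_im, Complex.I_re, Complex.I_im, Complex.neg_im, Complex.neg_re] at i1 i2 ⊢ <;>
    nlinarith [hd1, hd2]

lemma toMatrix_psd (hk : IsPSDKernel k) {n : ℕ} (s : Fin n → Ω) :
    (Matrix.of fun i j => k (s i) (s j)).PosSemidef := by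
  refine Matrix.PosSemidef.of_dotProduct_mulVec_nonneg ?_ ?_
  · ext i j
    simp only [Matrix.conjTranspose_apply, Matrix.of_apply, RCLike.star_def]
    exact (herm hk (s j) (s i)).symm
  · intro x
    have h := hk n s (star x)
    have : ∑ i, ∑ j, k (s i) (s j) * (star x) i * (starRingEnd ℂ) ((star x) j)
        = dotProduct (star x) ((Matrix.of fun i j => k (s i) (s j)).mulVec x) := by
      simp only [dotProduct, Matrix.mulVec, Matrix.of_apply, Pi.star_apply,
        Finset.mul_sum]
      refine Finset.sum_congr rfl fun i _ => Finset.sum_congr rfl fun j _ => ?_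
      simp [RCLike.star_def]
      ring
    rwa [this] at h

lemma key (hk : IsPSDKernel k) {n : ℕ} (s : Fin n → Ω) (v : Fin n → ℂ)
    (hv : ∑ i, ∑ j, k (s i) (s j) * v i * (starRingEnd ℂ) (v j) = 0) (μ : Ω) :
    ∑ i, k (s i) μ * v i = 0 := by
  classical
  set s' : Fin (n+1) → Ω := Fin.snoc s μ with hs'
  set x : Fin (n+1) → ℂ := Fin.snoc (star v) 0 with hx
  have hM := toMatrix_psd hk s'
  have hzero : dotProduct (star x) ((Matrix.of fun i j => k (s' i) (s' j)).mulVec x) = 0 := by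
    have hform : dotProduct (star x) ((Matrix.of fun i j => k (s' i) (s' j)).mulVec x)
        = ∑ i, ∑ j, k (s' i) (s' j) * (star x) i * (starRingEnd ℂ) ((star x) j) := by
      simp only [dotProduct, Matrix.mulVec, Matrix.of_apply, Pi.star_apply,
        Finset.mul_sum]
      refine Finset.sum_congr rfl fun i _ => Finset.sum_congr rfl fun j _ => ?_
      simp [RCLike.star_def]
      ring
    rw [hform, ← hv]
    simp only [hs', hx, Fin.sum_univ_castSucc, Pi.star_apply, Fin.snoc_castSucc,
      Fin.snoc_last, star_zero, star_star, map_zero, mul_zero, zero_mul,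
      add_zero, Finset.sum_const_zero]
  have hmv := (hM.dotProduct_mulVec_zero_iff x).mp hzero
  have hrow := congrFun hmv (Fin.last n)
  simp only [Matrix.mulVec, dotProduct, Matrix.of_apply, Pi.zero_apply] at hrow
  rw [Fin.sum_univ_castSucc] at hrow
  simp only [hs', hx, Fin.snoc_last, Fin.snoc_castSucc, mul_zero, add_zero,
    Pi.star_apply] at hrow
  -- hrow : ∑ j : Fin n, k μ (s j) * star (v j) = 0
  have := congrArg (starRingEnd ℂ) hrow
  simp only [map_sum, map_mul, map_zero] at this
  rw [← this]
  refine Finset.sum_congr rfl fun i _ => ?_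
  rw [herm hk (s i) μ]
  simp [RCLike.star_def]

lemma diag_real (hk : IsPSDKernel k) (μ : Ω) : k μ μ = ((k μ μ).re : ℂ) := by
  have := (Complex.nonneg_iff.mp (diag_nonneg hk μ)).2
  exact Complex.ext rfl this.symm

lemma not_all_diag_zero (hk : IsPSDKernel k) (hne : k ≠ 0) : ∃ μ, k μ μ ≠ 0 := by
  by_contra hc
  push_neg at hc
  refine hne (funext fun lam => funext fun mu => ?_)
  have := key hk (fun _ : Fin 1 => lam) (fun _ => 1) (by simp [hc lam]) mu
  simpa using this


/-- A nonzero positive semi-definite kernel is an extreme direction of the cone of positive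
semi-definite kernels iff it is a rank-one positive kernel `h(λ,μ) = F(λ) conj (F μ)`. -/
theorem stmt_10 {Ω : Type} (h : Ω → Ω → ℂ) (hPSD : IsPSDKernel h) (hne : h ≠ 0) :
    (∀ h₁ h₂ : Ω → Ω → ℂ, IsPSDKernel h₁ → IsPSDKernel h₂ →
      h = h₁ + h₂ →
      ∃ t₁ t₂ : ℝ, 0 ≤ t₁ ∧ 0 ≤ t₂ ∧
        (h₁ = fun lam mu => (t₁ : ℂ) * h lam mu) ∧
        (h₂ = fun lam mu => (t₂ : ℂ) * h lam mu)) ↔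
    ∃ F : Ω → ℂ, ∀ lam mu : Ω, h lam mu = F lam * (starRingEnd ℂ) (F mu) := by
  constructor
  · -- extreme → rank one
    intro hext
    obtain ⟨μ₀, hd0⟩ := not_all_diag_zero hPSD hne
    set d := h μ₀ μ₀ with hd
    have hd_eq : d = ((d.re : ℝ) : ℂ) := diag_real hPSD μ₀
    have hdre_nonneg : 0 ≤ d.re := (Complex.nonneg_iff.mp (diag_nonneg hPSD μ₀)).1
    have hdre_pos : 0 < d.re := by
      rcases hdre_nonneg.lt_or_eq with hlt | heq
      · exact hlt
      · exact absurd (by rw [hd_eq, ← heq]; simp) hd0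
    set h₁ : Ω → Ω → ℂ := fun lam mu => h lam μ₀ * h μ₀ mu / d with hh₁
    have hQ1 : ∀ (n : ℕ) (s : Fin n → Ω) (c : Fin n → ℂ),
        ∑ i, ∑ j, h₁ (s i) (s j) * c i * (starRingEnd ℂ) (c j)
        = (∑ i, h (s i) μ₀ * c i) * (starRingEnd ℂ) (∑ i, h (s i) μ₀ * c i) / d := by
      intro n s c
      rw [map_sum, Finset.sum_mul_sum, Finset.sum_div]
      refine Finset.sum_congr rfl fun i _ => ?_
      rw [Finset.sum_div]
      refine Finset.sum_congr rfl fun j _ => ?_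
      simp only [hh₁]
      rw [map_mul, herm hPSD (s j) μ₀]
      ring
    have hp1 : IsPSDKernel h₁ := by
      intro n s c
      rw [hQ1 n s c, Complex.mul_conj, hd_eq, ← Complex.ofReal_div]
      rw [Complex.zero_le_real]
      exact div_nonneg (Complex.normSq_nonneg _) hdre_pos.le
    set h₂ : Ω → Ω → ℂ := fun lam mu => h lam mu - h₁ lam mu with hh₂
    have hcd : (starRingEnd ℂ) d = d := (herm hPSD μ₀ μ₀).symm
    have hp2 : IsPSDKernel h₂ := by
      intro n s c
      set A := ∑ i, h (s i) μ₀ * c i with hA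
      have hbig := hPSD (n+1) (Fin.snoc s μ₀) (Fin.snoc c (-(A/d)))
      simp only [Fin.sum_univ_castSucc, Fin.snoc_castSucc, Fin.snoc_last] at hbig
      rw [Finset.sum_add_distrib] at hbig
      have e1 : ∑ i : Fin n, h (s i) μ₀ * c i * (starRingEnd ℂ) (-(A/d))
          = A * (starRingEnd ℂ) (-(A/d)) := by
        rw [← Finset.sum_mul]
      have e2 : ∑ j : Fin n, h μ₀ (s j) * (-(A/d)) * (starRingEnd ℂ) (c j)
          = (-(A/d)) * (starRingEnd ℂ) A := by
        rw [hA, map_sum, Finset.mul_sum]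
        refine Finset.sum_congr rfl fun j _ => ?_
        rw [map_mul, ← herm hPSD (s j) μ₀]
        ring
      rw [e1, e2] at hbig
      have tail : A * (starRingEnd ℂ) (-(A/d)) + ((-(A/d)) * (starRingEnd ℂ) A
          + h μ₀ μ₀ * (-(A/d)) * (starRingEnd ℂ) (-(A/d)))
          = -(A * (starRingEnd ℂ) A / d) := by
        rw [map_neg, map_div₀, hcd]
        field_simp
        ring
      rw [add_assoc, tail] at hbig
      have hgoal : ∑ i, ∑ j, h₂ (s i) (s j) * c i * (starRingEnd ℂ) (c j)
          = (∑ i, ∑ j, h (s i) (s j) * c i * (starRingEnd ℂ) (c j))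
            - A * (starRingEnd ℂ) A / d := by
        rw [← hQ1 n s c, ← Finset.sum_sub_distrib]
        refine Finset.sum_congr rfl fun i _ => ?_
        rw [← Finset.sum_sub_distrib]
        refine Finset.sum_congr rfl fun j _ => ?_
        simp only [hh₂]
        ring
      rw [hgoal, sub_eq_add_neg]
      exact hbig
    obtain ⟨t₁, t₂, ht₁, ht₂, e₁, e₂⟩ := hext h₁ h₂ hp1 hp2
      (by funext lam mu; show h lam mu = h₁ lam mu + (h lam mu - h₁ lam mu); ring)
    have h11 : h₁ μ₀ μ₀ = d := by
      show h μ₀ μ₀ * h μ₀ μ₀ / d = d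
      rw [← hd]
      field_simp
    have hmm := congrFun (congrFun e₁ μ₀) μ₀
    rw [h11, ← hd] at hmm
    have ht1 : (t₁ : ℂ) = 1 := by
      have := mul_right_cancel₀ hd0 (show (t₁ : ℂ) * d = 1 * d by rw [← hmm]; ring)
      exact this
    refine ⟨fun lam => h lam μ₀ / ((Real.sqrt d.re : ℝ) : ℂ), fun lam mu => ?_⟩
    have hlam := congrFun (congrFun e₁ lam) mu
    rw [ht1, one_mul] at hlam
    have hrank : h lam mu = h lam μ₀ * h μ₀ mu / d := hlam.symm
    rw [hrank, map_div₀, Complex.conj_ofReal, div_mul_div_comm, ← Complex.ofReal_mul,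
      Real.mul_self_sqrt hdre_nonneg, herm hPSD mu μ₀, ← hd_eq]
  · -- rank one → extreme
    rintro ⟨F, hF⟩ h₁ h₂ hp1 hp2 hsum
    have hFne : ∃ μ₀, F μ₀ ≠ 0 := by
      by_contra hc
      push_neg at hc
      exact hne (funext fun lam => funext fun mu => by simp [hF, hc])
    obtain ⟨μ₀, hF0⟩ := hFne
    have hrel : ∀ lam mu ν : Ω, h₁ lam ν * F mu - h₁ mu ν * F lam = 0 := by
      intro lam mu ν
      have hQh : ∑ i, ∑ j, h (![lam, mu] i) (![lam, mu] j) * (![F mu, -F lam]) i *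
          (starRingEnd ℂ) ((![F mu, -F lam]) j) = 0 := by
        simp only [Fin.sum_univ_two, Matrix.cons_val_zero, Matrix.cons_val_one,
          Matrix.head_cons, hF, map_neg]
        ring
      rw [hsum] at hQh
      simp only [Pi.add_apply, add_mul, Finset.sum_add_distrib] at hQh
      have hQ1 := hp1 2 ![lam, mu] ![F mu, -F lam]
      have hQ2 := hp2 2 ![lam, mu] ![F mu, -F lam]
      have h10 : ∑ i, ∑ j, h₁ (![lam, mu] i) (![lam, mu] j) * (![F mu, -F lam]) i *
          (starRingEnd ℂ) ((![F mu, -F lam]) j) = 0 := by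
        refine le_antisymm ?_ hQ1
        calc (∑ i, ∑ j, h₁ (![lam, mu] i) (![lam, mu] j) * (![F mu, -F lam]) i *
            (starRingEnd ℂ) ((![F mu, -F lam]) j))
            ≤ (∑ i, ∑ j, h₁ (![lam, mu] i) (![lam, mu] j) * (![F mu, -F lam]) i *
            (starRingEnd ℂ) ((![F mu, -F lam]) j))
            + (∑ i, ∑ j, h₂ (![lam, mu] i) (![lam, mu] j) * (![F mu, -F lam]) i *
            (starRingEnd ℂ) ((![F mu, -F lam]) j)) := le_add_of_nonneg_right hQ2
          _ = 0 := hQh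
      have := key hp1 ![lam, mu] ![F mu, -F lam] h10 ν
      simp only [Fin.sum_univ_two, Matrix.cons_val_zero, Matrix.cons_val_one,
        Matrix.head_cons] at this
      linear_combination this
    have hd₁real : (starRingEnd ℂ) (h₁ μ₀ μ₀) = h₁ μ₀ μ₀ := (herm hp1 μ₀ μ₀).symm
    set t₁ : ℝ := (h₁ μ₀ μ₀).re / Complex.normSq (F μ₀) with ht₁def
    have hns : (0:ℝ) < Complex.normSq (F μ₀) := Complex.normSq_pos.mpr hF0
    have key1 : ∀ lam ν : Ω, h₁ lam ν = (t₁ : ℂ) * h lam ν := by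
      intro lam ν
      have A := hrel lam μ₀ ν
      have B := hrel ν μ₀ μ₀
      have B' : (starRingEnd ℂ) (h₁ ν μ₀) * (starRingEnd ℂ) (F μ₀)
          - (starRingEnd ℂ) (h₁ μ₀ μ₀) * (starRingEnd ℂ) (F ν) = 0 := by
        have := congrArg (starRingEnd ℂ) B
        simpa [map_sub, map_mul] using this
      have C : h₁ μ₀ ν = (starRingEnd ℂ) (h₁ ν μ₀) := herm hp1 ν μ₀
      have hd₁eq : h₁ μ₀ μ₀ = (((h₁ μ₀ μ₀).re : ℝ) : ℂ) := diag_real hp1 μ₀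
      rw [hF]
      rw [ht₁def]
      push_cast
      rw [Complex.normSq_eq_conj_mul_self]
      have hconjne : (starRingEnd ℂ) (F μ₀) ≠ 0 := by
        simpa using hF0
      field_simp
      linear_combination ((starRingEnd ℂ) (F μ₀)) * A + F lam * B'
        + F lam * (starRingEnd ℂ) (F μ₀) * C
        + F lam * (starRingEnd ℂ) (F ν) * (hd₁eq.symm.trans hd₁real.symm)
        + 2 * F lam * (starRingEnd ℂ) (F ν) * (hd₁real.trans hd₁eq)
    have ht₁nonneg : 0 ≤ t₁ := by
      have := (Complex.nonneg_iff.mp (diag_nonneg hp1 μ₀)).1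
      exact div_nonneg this hns.le
    have hsub : ∀ lam mu : Ω, h₂ lam mu = h lam mu - h₁ lam mu := by
      intro lam mu
      have := congrFun (congrFun hsum lam) mu
      simp only [Pi.add_apply] at this
      linear_combination -this
    refine ⟨t₁, 1 - t₁, ht₁nonneg, ?_, funext fun lam => funext fun mu => key1 lam mu, ?_⟩
    · have h2d := (Complex.nonneg_iff.mp (diag_nonneg hp2 μ₀)).1
      have : h₂ μ₀ μ₀ = ((1 - t₁ : ℝ) : ℂ) * h μ₀ μ₀ := by
        rw [hsub μ₀ μ₀, key1 μ₀ μ₀]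
        push_cast
        ring
      rw [this] at h2d
      have hh0 : h μ₀ μ₀ = ((Complex.normSq (F μ₀) : ℝ) : ℂ) := by
        rw [hF μ₀ μ₀, Complex.mul_conj]
      rw [hh0, ← Complex.ofReal_mul] at h2d
      rw [Complex.ofReal_re] at h2d
      nlinarith
    · funext lam mu
      rw [hsub lam mu, key1 lam mu]
      push_cast
      ring
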